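/- For every c with 0 ≤ c ≤ c̄ there exists a Lipschitz function u : ℝ² → ℝ with u(x) ≥ 0 on [c,c+1]² and partial derivatives in [0,1] almost everywhere on [c,c+1]², such that Rev_c(u) = Opt(c). -/

import Mathlib

open MeasureTheory Real Set

/-- Partial derivative of `u` with respect to the first coordinate
(defined via `deriv`; for Lipschitz `u` it exists a.e. by Rademacher). -/
noncomputable def pd1 (u : ℝ × ℝ → ℝ) (x : ℝ × ℝ) : ℝ := deriv (fun t => u (t, x.2)) x.1

/-- Partial derivative of `u` with respect to the second coordinate. -/
noncomputable def pd2 (u : ℝ × ℝ → ℝ) (x : ℝ × ℝ) : ℝ := deriv (fun t => u (x.1, t)) x.2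

/-- The square `[c, c+1]²`. -/
def box (c : ℝ) : Set (ℝ × ℝ) := Icc c (c + 1) ×ˢ Icc c (c + 1)

/-- The revenue of the (relaxed) mechanism induced by utility `u`:
`∫_{[c,c+1]²} (x₁ ∂u/∂x₁ + x₂ ∂u/∂x₂ − u)`. -/
noncomputable def Rev (c : ℝ) (u : ℝ × ℝ → ℝ) : ℝ :=
  ∫ x in box c, (x.1 * pd1 u x + x.2 * pd2 u x - u x)

/-- `Opt(c)`, the optimal value of the convexity-relaxed program for `0 ≤ c ≤ c̄`. -/
noncomputable def Opt (c : ℝ) : ℝ :=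
  2 / 27 * ((Real.sqrt 2 - 4) * c ^ 3
    + 3 * (Real.sqrt (c * (3 * c + 2)) + Real.sqrt 2 + 1) * c ^ 2
    + (2 * Real.sqrt (c * (3 * c + 2)) + 3 * Real.sqrt 2 + 12) * c
    + Real.sqrt 2 + 6)

/-- `BRev(c)`, the best full-bundling revenue. -/
noncomputable def BRev (c : ℝ) : ℝ :=
  2 / 27 * (-4 * c ^ 3 + Real.sqrt 2 * Real.sqrt ((2 * c ^ 2 + 3) ^ 3) + 18 * c)

/-- The critical constant `c̄ = √(15 − 8√2) − 2√2 + 1 ≈ 0.0915`. -/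
noncomputable def cbar : ℝ := Real.sqrt (15 - 8 * Real.sqrt 2) - 2 * Real.sqrt 2 + 1

/-! ### Auxiliary constants -/

noncomputable def dd (c : ℝ) : ℝ := Real.sqrt (c * (3 * c + 2))
noncomputable def aP (c : ℝ) : ℝ := 2 * (c + 1) / 3
noncomputable def rr (c : ℝ) : ℝ := (2 * c + dd c) / 3
noncomputable def rr2 (c : ℝ) : ℝ := (2 - Real.sqrt 2) * (c + 1) / 3
noncomputable def qq1 (c : ℝ) : ℝ := aP c + rr c
noncomputable def qq2 (c : ℝ) : ℝ := aP c + rr2 c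

noncomputable def pB2 (c : ℝ) : ℝ × ℝ → ℝ := fun q => q.1 + q.2 - qq2 c
noncomputable def pB1 (c : ℝ) : ℝ × ℝ → ℝ := fun q => q.1 + q.2 - qq1 c
noncomputable def pM (c : ℝ) : ℝ × ℝ → ℝ := fun q => max q.1 q.2 - aP c

noncomputable def UU (c : ℝ) : ℝ × ℝ → ℝ := fun p =>
  max 0 (max (pB2 c p) (min (pB1 c p) (pM c p)))

noncomputable def Fp (c : ℝ) (p : ℝ × ℝ) : ℝ :=
  if min p.1 p.2 < rr c then (if qq1 c < p.1 + p.2 then qq1 c else 0)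
  else if min p.1 p.2 < rr2 c then (if aP c < max p.1 p.2 then aP c else 0)
  else (if qq2 c < p.1 + p.2 then qq2 c else 0)

/-! ### Basic numeric facts -/

lemma s2_sq : Real.sqrt 2 ^ 2 = 2 := Real.sq_sqrt (by norm_num)
lemma s2_nonneg : (0:ℝ) ≤ Real.sqrt 2 := Real.sqrt_nonneg 2
lemma s2_lb : (1.41:ℝ) ≤ Real.sqrt 2 := by
  nlinarith [s2_sq, s2_nonneg]
lemma s2_ub : Real.sqrt 2 ≤ 1.415 := by
  nlinarith [s2_sq, s2_nonneg]

lemma cbar_ub : cbar ≤ 1/10 := by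
  have h1 : Real.sqrt (15 - 8 * Real.sqrt 2) ≤ 2 * Real.sqrt 2 - 0.9 := by
    have h2 : (15:ℝ) - 8 * Real.sqrt 2 ≤ (2 * Real.sqrt 2 - 0.9)^2 := by
      nlinarith [s2_sq, s2_lb]
    calc Real.sqrt (15 - 8 * Real.sqrt 2) ≤ Real.sqrt ((2 * Real.sqrt 2 - 0.9)^2) :=
          Real.sqrt_le_sqrt h2
      _ = 2 * Real.sqrt 2 - 0.9 := Real.sqrt_sq (by nlinarith [s2_lb])
  unfold cbar; linarith

section facts
variable {c : ℝ} (hc0 : 0 ≤ c) (hc1 : c ≤ cbar)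

lemma hc10 (hc1 : c ≤ cbar) : c ≤ 1/10 := le_trans hc1 cbar_ub

lemma dd_nonneg : 0 ≤ dd c := Real.sqrt_nonneg _

lemma dd_sq (hc0 : 0 ≤ c) : dd c ^ 2 = 3 * c^2 + 2 * c := by
  unfold dd
  rw [Real.sq_sqrt (by nlinarith)]; ring

lemma dd_ge (hc0 : 0 ≤ c) : c ≤ dd c := by
  nlinarith [dd_sq hc0, dd_nonneg (c := c)]

lemma dd_le (hc0 : 0 ≤ c) : dd c ≤ 2 * c + 1 := by
  nlinarith [dd_sq hc0, dd_nonneg (c := c)]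

/-- the key inequality encoding `c ≤ c̄`: `rr c ≤ rr2 c`. -/
lemma rr_le_rr2 (hc0 : 0 ≤ c) (hc1 : c ≤ cbar) : rr c ≤ rr2 c := by
  have hcb0 : 0 ≤ cbar := le_trans hc0 hc1
  have hcbsq : (cbar + 2 * Real.sqrt 2 - 1)^2 = 15 - 8 * Real.sqrt 2 := by
    have : cbar + 2 * Real.sqrt 2 - 1 = Real.sqrt (15 - 8 * Real.sqrt 2) := by
      unfold cbar; ring
    rw [this, Real.sq_sqrt (by nlinarith [s2_ub])]
  have hexp : cbar^2 + (4 * Real.sqrt 2 - 2) * cbar + (4 * Real.sqrt 2 - 6) = 0 := by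
    linear_combination hcbsq - 4 * s2_sq
  have hfac : 0 ≤ (cbar - c) * (cbar + c + (4 * Real.sqrt 2 - 2)) :=
    mul_nonneg (by linarith) (by nlinarith [s2_lb])
  -- c² + (4√2−2)c + (4√2−6) ≤ 0
  have hquad : c^2 + (4 * Real.sqrt 2 - 2) * c + (4 * Real.sqrt 2 - 6) ≤ 0 := by
    nlinarith [hexp, hfac]
  have hR : 0 ≤ (2 - Real.sqrt 2) * (c + 1) - 2 * c := by
    nlinarith [s2_ub, hc10 hc1]
  have h2 : dd c ≤ (2 - Real.sqrt 2) * (c + 1) - 2 * c := by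
    have hsq : c * (3 * c + 2) ≤ ((2 - Real.sqrt 2) * (c + 1) - 2 * c)^2 := by
      nlinarith [s2_sq, s2_lb, s2_ub]
    calc dd c ≤ Real.sqrt (((2 - Real.sqrt 2) * (c + 1) - 2 * c)^2) := Real.sqrt_le_sqrt hsq
      _ = _ := Real.sqrt_sq hR
  unfold rr rr2; linarith

end facts

/-! ### Eventual equality helpers -/

open Filter Topology

lemma ev_max_left {f g : ℝ × ℝ → ℝ} {p : ℝ × ℝ} (hf : Continuous f) (hg : Continuous g)
    (h : g p < f p) : (fun q => max (f q) (g q)) =ᶠ[𝓝 p] f := by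
  filter_upwards [hg.continuousAt.eventually_lt hf.continuousAt h] with q hq
  exact max_eq_left hq.le

lemma ev_max_right {f g : ℝ × ℝ → ℝ} {p : ℝ × ℝ} (hf : Continuous f) (hg : Continuous g)
    (h : f p < g p) : (fun q => max (f q) (g q)) =ᶠ[𝓝 p] g := by
  filter_upwards [hf.continuousAt.eventually_lt hg.continuousAt h] with q hq
  exact max_eq_right hq.le

lemma ev_min_left {f g : ℝ × ℝ → ℝ} {p : ℝ × ℝ} (hf : Continuous f) (hg : Continuous g)
    (h : f p < g p) : (fun q => min (f q) (g q)) =ᶠ[𝓝 p] f := by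
  filter_upwards [hf.continuousAt.eventually_lt hg.continuousAt h] with q hq
  exact min_eq_left hq.le

lemma ev_min_right {f g : ℝ × ℝ → ℝ} {p : ℝ × ℝ} (hf : Continuous f) (hg : Continuous g)
    (h : g p < f p) : (fun q => min (f q) (g q)) =ᶠ[𝓝 p] g := by
  filter_upwards [hg.continuousAt.eventually_lt hf.continuousAt h] with q hq
  exact min_eq_right hq.le

lemma pd1_congr {u v : ℝ × ℝ → ℝ} {p : ℝ × ℝ} (h : u =ᶠ[𝓝 p] v) : pd1 u p = pd1 v p := by
  unfold pd1
  apply Filter.EventuallyEq.deriv_eq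
  have ht : Filter.Tendsto (fun t : ℝ => (t, p.2)) (𝓝 p.1) (𝓝 p) := by
    have := (continuous_id.prodMk (continuous_const (y := p.2))).tendsto p.1
    simpa using this
  exact h.comp_tendsto ht

lemma pd2_congr {u v : ℝ × ℝ → ℝ} {p : ℝ × ℝ} (h : u =ᶠ[𝓝 p] v) : pd2 u p = pd2 v p := by
  unfold pd2
  apply Filter.EventuallyEq.deriv_eq
  have ht : Filter.Tendsto (fun t : ℝ => (p.1, t)) (𝓝 p.2) (𝓝 p) := by
    have := ((continuous_const (y := p.1)).prodMk continuous_id).tendsto p.2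
    simpa using this
  exact h.comp_tendsto ht

lemma pd1_bundle (k : ℝ) (p : ℝ × ℝ) : pd1 (fun q => q.1 + q.2 - k) p = 1 := by
  unfold pd1
  have : HasDerivAt (fun t : ℝ => t + p.2 - k) 1 p.1 := by
    have h := (hasDerivAt_id p.1).add_const (p.2 - k)
    have e : (fun t : ℝ => t + p.2 - k) = fun t : ℝ => t + (p.2 - k) := by
      funext t; ring
    rw [e]; simpa using h
  exact this.deriv

lemma pd2_bundle (k : ℝ) (p : ℝ × ℝ) : pd2 (fun q => q.1 + q.2 - k) p = 1 := by
  unfold pd2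
  have : HasDerivAt (fun t : ℝ => p.1 + t - k) 1 p.2 := by
    have h := ((hasDerivAt_id p.2).const_add p.1).sub_const k
    simpa using h
  exact this.deriv

lemma pd1_item1 (k : ℝ) (p : ℝ × ℝ) : pd1 (fun q => q.1 - k) p = 1 := by
  unfold pd1
  exact ((hasDerivAt_id p.1).sub_const k).deriv

lemma pd2_item1 (k : ℝ) (p : ℝ × ℝ) : pd2 (fun q => q.1 - k) p = 0 := by
  unfold pd2
  exact (hasDerivAt_const p.2 (p.1 - k)).deriv

lemma pd1_item2 (k : ℝ) (p : ℝ × ℝ) : pd1 (fun q => q.2 - k) p = 0 := by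
  unfold pd1
  exact (hasDerivAt_const p.1 (p.2 - k)).deriv

lemma pd2_item2 (k : ℝ) (p : ℝ × ℝ) : pd2 (fun q => q.2 - k) p = 1 := by
  unfold pd2
  exact ((hasDerivAt_id p.2).sub_const k).deriv

lemma pd1_zero (p : ℝ × ℝ) : pd1 (fun _ => (0:ℝ)) p = 0 := by
  unfold pd1
  exact (hasDerivAt_const p.1 (0:ℝ)).deriv

lemma pd2_zero (p : ℝ × ℝ) : pd2 (fun _ => (0:ℝ)) p = 0 := by
  unfold pd2
  exact (hasDerivAt_const p.2 (0:ℝ)).deriv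
/-! ### continuity of pieces -/

lemma contB2 {c : ℝ} : Continuous (pB2 c) :=
  (continuous_fst.add continuous_snd).sub continuous_const
lemma contB1 {c : ℝ} : Continuous (pB1 c) :=
  (continuous_fst.add continuous_snd).sub continuous_const
lemma contM {c : ℝ} : Continuous (pM c) :=
  (continuous_fst.max continuous_snd).sub continuous_const

/-! ### the good point lemma -/

lemma good_point {c : ℝ} (hc0 : 0 ≤ c) (hc1 : c ≤ cbar) {p : ℝ × ℝ}
    (h1 : p.1 ≠ p.2) (h2 : p.1 + p.2 ≠ qq1 c) (h3 : p.1 + p.2 ≠ qq2 c)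
    (h4 : min p.1 p.2 ≠ rr c) (h5 : min p.1 p.2 ≠ rr2 c) (h6 : max p.1 p.2 ≠ aP c) :
    pd1 (UU c) p ∈ Icc (0:ℝ) 1 ∧ pd2 (UU c) p ∈ Icc (0:ℝ) 1 ∧
      p.1 * pd1 (UU c) p + p.2 * pd2 (UU c) p - UU c p = Fp c p := by
  have hq12 : qq1 c ≤ qq2 c := by
    have := rr_le_rr2 hc0 hc1; unfold qq1 qq2; linarith
  have hsum : min p.1 p.2 + max p.1 p.2 = p.1 + p.2 := min_add_max p.1 p.2
  rcases h4.lt_or_gt with hminr | hminr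
  · -- Case A : min < rr c, the `q1`-bundle zone
    have hB1M : pB1 c p < pM c p := by
      simp only [pB1, pM, qq1]; linarith
    have hW : (fun q => min (pB1 c q) (pM c q)) =ᶠ[𝓝 p] pB1 c :=
      ev_min_left contB1 contM hB1M
    have heq : (fun q => max 0 (max (pB2 c q) (pB1 c q))) = (fun q => max 0 (pB1 c q)) := by
      funext q
      rw [max_eq_right (show pB2 c q ≤ pB1 c q by simp only [pB1, pB2]; linarith)]
    have hU1 : UU c =ᶠ[𝓝 p] (fun q => max 0 (pB1 c q)) := by
      rw [← heq]
      exact hW.mono fun q hq => by dsimp only at hq; simp only [UU]; rw [hq]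
    rcases h2.lt_or_gt with hlt | hgt
    · -- no sale : u ≈ 0
      have hU2 : (fun q => max 0 (pB1 c q)) =ᶠ[𝓝 p] (fun _ => (0:ℝ)) := by
        have := ev_max_left (f := fun _ : ℝ × ℝ => (0:ℝ)) (g := pB1 c)
          continuous_const contB1 (by simp only [pB1]; linarith)
        exact this
      have hloc : UU c =ᶠ[𝓝 p] (fun _ => (0:ℝ)) := hU1.trans hU2
      rw [pd1_congr hloc, pd2_congr hloc, hloc.eq_of_nhds, pd1_zero, pd2_zero]
      refine ⟨by norm_num, by norm_num, ?_⟩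
      simp only [Fp, if_pos hminr, if_neg (not_lt.2 hlt.le)]
      ring
    · -- q1-bundle sold : u ≈ pB1
      have hU2 : (fun q => max 0 (pB1 c q)) =ᶠ[𝓝 p] pB1 c := by
        have := ev_max_right (f := fun _ : ℝ × ℝ => (0:ℝ)) (g := pB1 c)
          continuous_const contB1 (by simp only [pB1]; linarith)
        exact this
      have hloc : UU c =ᶠ[𝓝 p] pB1 c := hU1.trans hU2
      have e1 : pd1 (UU c) p = 1 := by
        rw [pd1_congr hloc]; exact pd1_bundle (qq1 c) p
      have e2 : pd2 (UU c) p = 1 := by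
        rw [pd2_congr hloc]; exact pd2_bundle (qq1 c) p
      rw [e1, e2, hloc.eq_of_nhds]
      refine ⟨by norm_num, by norm_num, ?_⟩
      simp only [Fp, if_pos hminr, if_pos hgt, pB1]
      ring
  · -- Case B : rr c < min
    have hB1M : pM c p < pB1 c p := by
      simp only [pB1, pM, qq1]; linarith
    have hW : (fun q => min (pB1 c q) (pM c q)) =ᶠ[𝓝 p] pM c :=
      ev_min_right contB1 contM hB1M
    have hU1 : UU c =ᶠ[𝓝 p] (fun q => max 0 (max (pB2 c q) (pM c q))) :=
      hW.mono fun q hq => by dsimp only at hq; simp only [UU]; rw [hq]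
    rcases h5.lt_or_gt with hm2 | hm2
    · -- B-i : rr < min < rr2, the item zone
      have hB2M : pB2 c p < pM c p := by
        simp only [pB2, pM, qq2]; linarith
      have hU2 : UU c =ᶠ[𝓝 p] (fun q => max 0 (pM c q)) :=
        hU1.trans ((ev_max_right contB2 contM hB2M).mono fun q hq => by
          dsimp only at hq ⊢; rw [hq])
      rcases h6.lt_or_gt with hlt | hgt
      · -- no sale
        have hloc : UU c =ᶠ[𝓝 p] (fun _ => (0:ℝ)) :=
          hU2.trans (ev_max_left (f := fun _ : ℝ × ℝ => (0:ℝ)) (g := pM c)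
            continuous_const contM (by simp only [pM]; linarith))
        rw [pd1_congr hloc, pd2_congr hloc, hloc.eq_of_nhds, pd1_zero, pd2_zero]
        refine ⟨by norm_num, by norm_num, ?_⟩
        simp only [Fp, if_neg (not_lt.2 hminr.le), if_pos hm2, if_neg (not_lt.2 hlt.le)]
        ring
      · -- item sold
        have hU3 : UU c =ᶠ[𝓝 p] pM c :=
          hU2.trans (ev_max_right (f := fun _ : ℝ × ℝ => (0:ℝ)) (g := pM c)
            continuous_const contM (by simp only [pM]; linarith))
        rcases h1.lt_or_gt with hxy | hxy
        · -- p.1 < p.2 : item 2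
          have hM2 : pM c =ᶠ[𝓝 p] (fun q => q.2 - aP c) := by
            filter_upwards [continuous_fst.continuousAt.eventually_lt
              continuous_snd.continuousAt hxy] with q hq
            simp only [pM]; rw [max_eq_right hq.le]
          have hloc : UU c =ᶠ[𝓝 p] (fun q => q.2 - aP c) := hU3.trans hM2
          have e1 : pd1 (UU c) p = 0 := by rw [pd1_congr hloc]; exact pd1_item2 _ p
          have e2 : pd2 (UU c) p = 1 := by rw [pd2_congr hloc]; exact pd2_item2 _ p
          rw [e1, e2, hloc.eq_of_nhds]
          refine ⟨by norm_num, by norm_num, ?_⟩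
          simp only [Fp, if_neg (not_lt.2 hminr.le), if_pos hm2, if_pos hgt]
          ring
        · -- p.2 < p.1 : item 1
          have hM2 : pM c =ᶠ[𝓝 p] (fun q => q.1 - aP c) := by
            filter_upwards [continuous_snd.continuousAt.eventually_lt
              continuous_fst.continuousAt hxy] with q hq
            simp only [pM]; rw [max_eq_left hq.le]
          have hloc : UU c =ᶠ[𝓝 p] (fun q => q.1 - aP c) := hU3.trans hM2
          have e1 : pd1 (UU c) p = 1 := by rw [pd1_congr hloc]; exact pd1_item1 _ p
          have e2 : pd2 (UU c) p = 0 := by rw [pd2_congr hloc]; exact pd2_item1 _ p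
          rw [e1, e2, hloc.eq_of_nhds]
          refine ⟨by norm_num, by norm_num, ?_⟩
          simp only [Fp, if_neg (not_lt.2 hminr.le), if_pos hm2, if_pos hgt]
          ring
    · -- B-ii : rr2 < min, the q2-bundle zone
      have hB2M : pM c p < pB2 c p := by
        simp only [pB2, pM, qq2]; linarith
      have hU2 : UU c =ᶠ[𝓝 p] (fun q => max 0 (pB2 c q)) :=
        hU1.trans ((ev_max_left contB2 contM hB2M).mono fun q hq => by
          dsimp only at hq ⊢; rw [hq])
      rcases h3.lt_or_gt with hlt | hgt
      · have hloc : UU c =ᶠ[𝓝 p] (fun _ => (0:ℝ)) :=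
          hU2.trans (ev_max_left (f := fun _ : ℝ × ℝ => (0:ℝ)) (g := pB2 c)
            continuous_const contB2 (by simp only [pB2]; linarith))
        rw [pd1_congr hloc, pd2_congr hloc, hloc.eq_of_nhds, pd1_zero, pd2_zero]
        refine ⟨by norm_num, by norm_num, ?_⟩
        simp only [Fp, if_neg (not_lt.2 hminr.le), if_neg (not_lt.2 hm2.le),
          if_neg (not_lt.2 hlt.le)]
        ring
      · have hloc : UU c =ᶠ[𝓝 p] pB2 c :=
          hU2.trans (ev_max_right (f := fun _ : ℝ × ℝ => (0:ℝ)) (g := pB2 c)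
            continuous_const contB2 (by simp only [pB2]; linarith))
        have e1 : pd1 (UU c) p = 1 := by rw [pd1_congr hloc]; exact pd1_bundle _ p
        have e2 : pd2 (UU c) p = 1 := by rw [pd2_congr hloc]; exact pd2_bundle _ p
        rw [e1, e2, hloc.eq_of_nhds]
        refine ⟨by norm_num, by norm_num, ?_⟩
        simp only [Fp, if_neg (not_lt.2 hminr.le), if_neg (not_lt.2 hm2.le), if_pos hgt, pB2]
        ring
/-! ### null sets -/

lemma ae_ne_pt (β : ℝ) : ∀ᵐ y : ℝ, y ≠ β := by
  rw [ae_iff]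
  rw [show {y : ℝ | ¬ y ≠ β} = {β} by ext y; simp]
  exact volume_singleton

lemma slant_null (k β : ℝ) (hk : k ≠ 0) : volume {p : ℝ × ℝ | p.1 + k * p.2 = β} = 0 := by
  have hm : MeasurableSet {p : ℝ × ℝ | p.1 + k * p.2 = β} :=
    (isClosed_eq (continuous_fst.add (continuous_const.mul continuous_snd))
      continuous_const).measurableSet
  rw [show (volume : Measure (ℝ × ℝ)) = (volume : Measure ℝ).prod volume from rfl,
    Measure.measure_prod_null hm]
  refine Filter.Eventually.of_forall fun x => ?_
  have : (Prod.mk x ⁻¹' {p : ℝ × ℝ | p.1 + k * p.2 = β}) = {(β - x)/k} := by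
    ext y
    simp only [mem_preimage, mem_setOf_eq, mem_singleton_iff]
    constructor
    · intro h; field_simp; linarith
    · intro h; rw [h]; field_simp; ring
  simp only [this]
  exact volume_singleton

lemma vline_null (β : ℝ) : volume {p : ℝ × ℝ | p.1 = β} = 0 := by
  have hm : MeasurableSet {p : ℝ × ℝ | p.1 = β} :=
    (isClosed_eq continuous_fst continuous_const).measurableSet
  rw [show (volume : Measure (ℝ × ℝ)) = (volume : Measure ℝ).prod volume from rfl,
    Measure.measure_prod_null hm]
  filter_upwards [ae_ne_pt β] with x hx
  have : (Prod.mk x ⁻¹' {p : ℝ × ℝ | p.1 = β}) = ∅ := by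
    ext y; simp [hx]
  simp only [this]
  exact measure_empty

lemma hline_null (β : ℝ) : volume {p : ℝ × ℝ | p.2 = β} = 0 := by
  have hm : MeasurableSet {p : ℝ × ℝ | p.2 = β} :=
    (isClosed_eq continuous_snd continuous_const).measurableSet
  rw [show (volume : Measure (ℝ × ℝ)) = (volume : Measure ℝ).prod volume from rfl,
    Measure.measure_prod_null hm]
  refine Filter.Eventually.of_forall fun x => ?_
  have : (Prod.mk x ⁻¹' {p : ℝ × ℝ | p.2 = β}) = {β} := by
    ext y; simp
  simp only [this]
  exact volume_singleton

lemma ae_good (c : ℝ) (hc0 : 0 ≤ c) (hc1 : c ≤ cbar) :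
    ∀ᵐ p : ℝ × ℝ, (pd1 (UU c) p ∈ Icc (0:ℝ) 1 ∧ pd2 (UU c) p ∈ Icc (0:ℝ) 1) ∧
      p.1 * pd1 (UU c) p + p.2 * pd2 (UU c) p - UU c p = Fp c p := by
  have e1 : ∀ᵐ p : ℝ × ℝ, p ∉ {q : ℝ × ℝ | q.1 + 1 * q.2 = qq1 c} :=
    measure_eq_zero_iff_ae_notMem.mp (slant_null 1 _ one_ne_zero)
  have e2 : ∀ᵐ p : ℝ × ℝ, p ∉ {q : ℝ × ℝ | q.1 + 1 * q.2 = qq2 c} :=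
    measure_eq_zero_iff_ae_notMem.mp (slant_null 1 _ one_ne_zero)
  have e3 : ∀ᵐ p : ℝ × ℝ, p ∉ {q : ℝ × ℝ | q.1 + (-1) * q.2 = 0} :=
    measure_eq_zero_iff_ae_notMem.mp (slant_null (-1) _ (by norm_num))
  have f1 : ∀ᵐ p : ℝ × ℝ, p ∉ {q : ℝ × ℝ | q.1 = rr c} :=
    measure_eq_zero_iff_ae_notMem.mp (vline_null _)
  have f2 : ∀ᵐ p : ℝ × ℝ, p ∉ {q : ℝ × ℝ | q.1 = rr2 c} :=
    measure_eq_zero_iff_ae_notMem.mp (vline_null _)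
  have f3 : ∀ᵐ p : ℝ × ℝ, p ∉ {q : ℝ × ℝ | q.1 = aP c} :=
    measure_eq_zero_iff_ae_notMem.mp (vline_null _)
  have g1 : ∀ᵐ p : ℝ × ℝ, p ∉ {q : ℝ × ℝ | q.2 = rr c} :=
    measure_eq_zero_iff_ae_notMem.mp (hline_null _)
  have g2 : ∀ᵐ p : ℝ × ℝ, p ∉ {q : ℝ × ℝ | q.2 = rr2 c} :=
    measure_eq_zero_iff_ae_notMem.mp (hline_null _)
  have g3 : ∀ᵐ p : ℝ × ℝ, p ∉ {q : ℝ × ℝ | q.2 = aP c} :=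
    measure_eq_zero_iff_ae_notMem.mp (hline_null _)
  filter_upwards [e1, e2, e3, f1, f2, f3, g1, g2, g3]
    with p he1 he2 he3 hf1 hf2 hf3 hg1 hg2 hg3
  have he1' : ¬ (p.1 + 1 * p.2 = qq1 c) := he1
  have he2' : ¬ (p.1 + 1 * p.2 = qq2 c) := he2
  have he3' : ¬ (p.1 + (-1) * p.2 = 0) := he3
  have hf1' : ¬ (p.1 = rr c) := hf1
  have hf2' : ¬ (p.1 = rr2 c) := hf2
  have hf3' : ¬ (p.1 = aP c) := hf3
  have hg1' : ¬ (p.2 = rr c) := hg1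
  have hg2' : ¬ (p.2 = rr2 c) := hg2
  have hg3' : ¬ (p.2 = aP c) := hg3
  have H := good_point hc0 hc1
    (fun h => he3' (by rw [h]; ring))
    (fun h => he1' (by linarith))
    (fun h => he2' (by linarith))
    (by rcases min_choice p.1 p.2 with h | h <;> rw [h] <;> assumption)
    (by rcases min_choice p.1 p.2 with h | h <;> rw [h] <;> assumption)
    (by rcases max_choice p.1 p.2 with h | h <;> rw [h] <;> assumption)
  exact ⟨⟨H.1, H.2.1⟩, H.2.2⟩

/-! ### Lipschitz and nonnegativity -/

lemma lip_sum (k : ℝ) : LipschitzWith 2 (fun q : ℝ × ℝ => q.1 + q.2 - k) := by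
  apply LipschitzWith.of_dist_le_mul
  intro p q
  rw [Real.dist_eq, Prod.dist_eq, Real.dist_eq, Real.dist_eq]
  have h1 : |p.1 - q.1| ≤ max |p.1 - q.1| |p.2 - q.2| := le_max_left _ _
  have h2 : |p.2 - q.2| ≤ max |p.1 - q.1| |p.2 - q.2| := le_max_right _ _
  have : |p.1 + p.2 - k - (q.1 + q.2 - k)| ≤ |p.1 - q.1| + |p.2 - q.2| := by
    have := abs_add_le (p.1 - q.1) (p.2 - q.2)
    calc |p.1 + p.2 - k - (q.1 + q.2 - k)| = |(p.1 - q.1) + (p.2 - q.2)| := by ring_nf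
      _ ≤ _ := this
  push_cast
  linarith

lemma lip_max (k : ℝ) : LipschitzWith 1 (fun q : ℝ × ℝ => max q.1 q.2 - k) := by
  apply LipschitzWith.of_dist_le_mul
  intro p q
  rw [Real.dist_eq, Prod.dist_eq, Real.dist_eq, Real.dist_eq]
  have : |max p.1 p.2 - k - (max q.1 q.2 - k)| = |max p.1 p.2 - max q.1 q.2| := by ring_nf
  rw [this]
  push_cast
  calc |max p.1 p.2 - max q.1 q.2| ≤ max |p.1 - q.1| |p.2 - q.2| := abs_max_sub_max_le_max _ _ _ _
    _ ≤ 1 * max |p.1 - q.1| |p.2 - q.2| := by rw [one_mul]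

lemma UU_lipschitz (c : ℝ) : ∃ K : NNReal, LipschitzWith K (UU c) := by
  refine ⟨0 ⊔ (2 ⊔ (2 ⊔ 1)), ?_⟩
  have h0 : LipschitzWith 0 (fun _ : ℝ × ℝ => (0:ℝ)) := LipschitzWith.const _
  have hB2 : LipschitzWith 2 (pB2 c) := lip_sum _
  have hB1 : LipschitzWith 2 (pB1 c) := lip_sum _
  have hM : LipschitzWith 1 (pM c) := lip_max _
  exact h0.max (hB2.max (hB1.min hM))

lemma UU_nonneg (c : ℝ) (p : ℝ × ℝ) : 0 ≤ UU c p := le_max_left _ _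
/-! ### interval integral helpers -/

lemma intInt_eq_Ioo {f g : ℝ → ℝ} {α β : ℝ} (hab : α ≤ β) (h : ∀ y ∈ Ioo α β, f y = g y) :
    ∫ y in α..β, f y = ∫ y in α..β, g y := by
  apply intervalIntegral.integral_congr_ae
  filter_upwards [ae_ne_pt β] with y hy hmem
  rw [uIoc_of_le hab] at hmem
  exact h y ⟨hmem.1, lt_of_le_of_ne hmem.2 hy⟩

lemma intInt_integrable_of_Ioo {f g : ℝ → ℝ} {α β : ℝ} (hab : α ≤ β)
    (hg : IntervalIntegrable g volume α β)
    (h : ∀ y ∈ Ioo α β, f y = g y) : IntervalIntegrable f volume α β := by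
  rw [intervalIntegrable_iff_integrableOn_Ioc_of_le hab] at hg ⊢
  apply hg.congr
  rw [EventuallyEq, ae_restrict_iff' measurableSet_Ioc]
  filter_upwards [ae_ne_pt β] with y hy hmem
  exact (h y ⟨hmem.1, lt_of_le_of_ne hmem.2 hy⟩).symm

lemma int_const_Ioo {f : ℝ → ℝ} {α β k : ℝ} (hab : α ≤ β) (h : ∀ y ∈ Ioo α β, f y = k) :
    ∫ y in α..β, f y = k * (β - α) := by
  rw [intInt_eq_Ioo hab h, intervalIntegral.integral_const, smul_eq_mul]; ring

lemma intInt_const_Ioo {f : ℝ → ℝ} {α β k : ℝ} (hab : α ≤ β) (h : ∀ y ∈ Ioo α β, f y = k) :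
    IntervalIntegrable f volume α β :=
  intInt_integrable_of_Ioo hab intervalIntegrable_const h

lemma int_linear_Ioo {f : ℝ → ℝ} {α β k0 k1 : ℝ} (hab : α ≤ β)
    (h : ∀ y ∈ Ioo α β, f y = k0 + k1 * y) :
    ∫ y in α..β, f y = k0 * (β - α) + k1 * (β^2 - α^2) / 2 := by
  have hadd : (∫ y in α..β, (k0 + k1 * y)) = (∫ y in α..β, (k0:ℝ)) + ∫ y in α..β, k1 * y :=
    intervalIntegral.integral_add intervalIntegrable_const
      (Continuous.intervalIntegrable (by continuity) _ _)
  have hid : (∫ y in α..β, y) = (β^2 - α^2)/2 := integral_id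
  rw [intInt_eq_Ioo hab h, hadd, intervalIntegral.integral_const,
    intervalIntegral.integral_const_mul, hid, smul_eq_mul]
  ring

lemma intInt_linear_Ioo {f : ℝ → ℝ} {α β k0 k1 : ℝ} (hab : α ≤ β)
    (h : ∀ y ∈ Ioo α β, f y = k0 + k1 * y) :
    IntervalIntegrable f volume α β :=
  intInt_integrable_of_Ioo hab
    (Continuous.intervalIntegrable (by continuity) _ _) h

/-! ### measurability and integrability of Fp -/

lemma Fp_measurable (c : ℝ) : Measurable (Fp c) := by
  unfold Fp
  refine Measurable.ite ?_ (Measurable.ite ?_ measurable_const measurable_const)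
    (Measurable.ite ?_ (Measurable.ite ?_ measurable_const measurable_const)
      (Measurable.ite ?_ measurable_const measurable_const))
  · exact measurableSet_lt (measurable_fst.min measurable_snd) measurable_const
  · exact measurableSet_lt measurable_const (measurable_fst.add measurable_snd)
  · exact measurableSet_lt (measurable_fst.min measurable_snd) measurable_const
  · exact measurableSet_lt measurable_const (measurable_fst.max measurable_snd)
  · exact measurableSet_lt measurable_const (measurable_fst.add measurable_snd)

lemma Fp_abs_le {c : ℝ} (hc0 : 0 ≤ c) (hc1 : c ≤ cbar) (p : ℝ × ℝ) :
    ‖Fp c p‖ ≤ qq2 c := by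
  have hd0 : 0 ≤ dd c := dd_nonneg
  have hdc : c ≤ dd c := dd_ge hc0
  have hre : rr c ≤ rr2 c := rr_le_rr2 hc0 hc1
  have hrr : rr c = (2*c + dd c)/3 := rfl
  have hrr2 : rr2 c = (2-Real.sqrt 2)*(c+1)/3 := rfl
  have haP : aP c = 2*(c+1)/3 := rfl
  have hqq1 : qq1 c = aP c + rr c := rfl
  have hqq2 : qq2 c = aP c + rr2 c := rfl
  rw [Real.norm_eq_abs, abs_le]
  unfold Fp
  constructor <;> split_ifs <;> linarith

lemma Fp_integrableOn {c : ℝ} (hc0 : 0 ≤ c) (hc1 : c ≤ cbar) :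
    IntegrableOn (Fp c) (box c) volume := by
  apply Measure.integrableOn_of_bounded (M := qq2 c)
  · rw [show (volume : Measure (ℝ × ℝ)) = (volume : Measure ℝ).prod volume from rfl]
    unfold box
    rw [Measure.prod_prod]
    exact ENNReal.mul_ne_top (by rw [Real.volume_Icc]; exact ENNReal.ofReal_ne_top)
      (by rw [Real.volume_Icc]; exact ENNReal.ofReal_ne_top)
  · exact (Fp_measurable c).aestronglyMeasurable
  · exact Filter.Eventually.of_forall fun p => Fp_abs_le hc0 hc1 p

lemma rev_eq_iterated {c : ℝ} (hc0 : 0 ≤ c) (hc1 : c ≤ cbar) :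
    Rev c (UU c) = ∫ x in Icc c (c+1), ∫ y in Icc c (c+1), Fp c (x, y) := by
  unfold Rev
  rw [integral_congr_ae (ae_restrict_of_ae ((ae_good c hc0 hc1).mono fun p hp => hp.2))]
  exact setIntegral_prod (Fp c) (Fp_integrableOn hc0 hc1)
/-! ### inner integrals -/

lemma Fp_mk (c x y : ℝ) : Fp c (x, y) =
    if min x y < rr c then (if qq1 c < x + y then qq1 c else 0)
    else if min x y < rr2 c then (if aP c < max x y then aP c else 0)
    else (if qq2 c < x + y then qq2 c else 0) := rfl

lemma inner1 {c x : ℝ} (hc0 : 0 ≤ c) (hc1 : c ≤ cbar) (hx1 : c < x) (hx2 : x < rr c) :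
    ∫ y in Icc c (c+1), Fp c (x, y) = qq1 c * (c + 1 - (qq1 c - x)) := by
  have hd0 : 0 ≤ dd c := dd_nonneg
  have hdc : c ≤ dd c := dd_ge hc0
  have hdu : dd c ≤ 2*c+1 := dd_le hc0
  have hre : rr c ≤ rr2 c := rr_le_rr2 hc0 hc1
  have hsl : (1.41:ℝ) ≤ Real.sqrt 2 := s2_lb
  have hsu : Real.sqrt 2 ≤ 1.415 := s2_ub
  have hcu : c ≤ 1/10 := hc10 hc1
  have hsc0 : 0 ≤ Real.sqrt 2 * c := mul_nonneg (by linarith) hc0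
  have hsc2 : Real.sqrt 2 * c ≤ 1.415 * c := by
    nlinarith [mul_nonneg (sub_nonneg.2 hsu) hc0]
  have hrr : rr c = (2*c + dd c)/3 := rfl
  have hrr2 : rr2 c = (2-Real.sqrt 2)*(c+1)/3 := rfl
  have haP : aP c = 2*(c+1)/3 := rfl
  have hqq1 : qq1 c = aP c + rr c := rfl
  have hqq2 : qq2 c = aP c + rr2 c := rfl
  have hb1 : c ≤ qq1 c - x := by linarith
  have hb2 : qq1 c - x ≤ c + 1 := by linarith
  have v1 : ∀ y ∈ Ioo c (qq1 c - x), Fp c (x, y) = 0 := by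
    intro y hy
    rw [Fp_mk, if_pos (lt_of_le_of_lt (min_le_left x y) hx2),
      if_neg (not_lt.2 (by linarith [hy.2] : x + y ≤ qq1 c))]
  have v2 : ∀ y ∈ Ioo (qq1 c - x) (c+1), Fp c (x, y) = qq1 c := by
    intro y hy
    rw [Fp_mk, if_pos (lt_of_le_of_lt (min_le_left x y) hx2),
      if_pos (by linarith [hy.1] : qq1 c < x + y)]
  rw [integral_Icc_eq_integral_Ioc, ← intervalIntegral.integral_of_le (by linarith : c ≤ c+1),
    ← intervalIntegral.integral_add_adjacent_intervals
      (intInt_const_Ioo hb1 v1) (intInt_const_Ioo hb2 v2),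
    int_const_Ioo hb1 v1, int_const_Ioo hb2 v2]
  ring

lemma inner2 {c x : ℝ} (hc0 : 0 ≤ c) (hc1 : c ≤ cbar) (hx1 : rr c < x) (hx2 : x < rr2 c) :
    ∫ y in Icc c (c+1), Fp c (x, y) = aP c * (c + 1 - aP c) := by
  have hd0 : 0 ≤ dd c := dd_nonneg
  have hdc : c ≤ dd c := dd_ge hc0
  have hdu : dd c ≤ 2*c+1 := dd_le hc0
  have hre : rr c ≤ rr2 c := rr_le_rr2 hc0 hc1
  have hsl : (1.41:ℝ) ≤ Real.sqrt 2 := s2_lb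
  have hsu : Real.sqrt 2 ≤ 1.415 := s2_ub
  have hcu : c ≤ 1/10 := hc10 hc1
  have hsc0 : 0 ≤ Real.sqrt 2 * c := mul_nonneg (by linarith) hc0
  have hsc2 : Real.sqrt 2 * c ≤ 1.415 * c := by
    nlinarith [mul_nonneg (sub_nonneg.2 hsu) hc0]
  have hrr : rr c = (2*c + dd c)/3 := rfl
  have hrr2 : rr2 c = (2-Real.sqrt 2)*(c+1)/3 := rfl
  have haP : aP c = 2*(c+1)/3 := rfl
  have hqq1 : qq1 c = aP c + rr c := rfl
  have hqq2 : qq2 c = aP c + rr2 c := rfl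
  have hb1 : c ≤ rr c := by linarith
  have hb2 : rr c ≤ aP c := by linarith
  have hb3 : aP c ≤ c + 1 := by linarith
  have v1 : ∀ y ∈ Ioo c (rr c), Fp c (x, y) = 0 := by
    intro y hy
    rw [Fp_mk, if_pos (lt_of_le_of_lt (min_le_right x y) hy.2),
      if_neg (not_lt.2 (by linarith [hy.2] : x + y ≤ qq1 c))]
  have v2 : ∀ y ∈ Ioo (rr c) (aP c), Fp c (x, y) = 0 := by
    intro y hy
    rw [Fp_mk, if_neg (not_lt.2 (le_min hx1.le hy.1.le)),
      if_pos (lt_of_le_of_lt (min_le_left x y) hx2),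
      if_neg (not_lt.2 (max_le (by linarith) hy.2.le))]
  have v3 : ∀ y ∈ Ioo (aP c) (c+1), Fp c (x, y) = aP c := by
    intro y hy
    rw [Fp_mk, if_neg (not_lt.2 (le_min hx1.le (by linarith [hy.1] : rr c ≤ y))),
      if_pos (lt_of_le_of_lt (min_le_left x y) hx2),
      if_pos (lt_of_lt_of_le hy.1 (le_max_right x y))]
  have I1 := intInt_const_Ioo hb1 v1
  have I2 := intInt_const_Ioo hb2 v2
  have I3 := intInt_const_Ioo hb3 v3
  rw [integral_Icc_eq_integral_Ioc, ← intervalIntegral.integral_of_le (by linarith : c ≤ c+1),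
    ← intervalIntegral.integral_add_adjacent_intervals (I1.trans I2) I3,
    ← intervalIntegral.integral_add_adjacent_intervals I1 I2,
    int_const_Ioo hb1 v1, int_const_Ioo hb2 v2, int_const_Ioo hb3 v3]
  ring

lemma inner3 {c x : ℝ} (hc0 : 0 ≤ c) (hc1 : c ≤ cbar) (hx1 : rr2 c < x) (hx2 : x < aP c) :
    ∫ y in Icc c (c+1), Fp c (x, y) = qq2 c * (c + 1 - (qq2 c - x)) := by
  have hd0 : 0 ≤ dd c := dd_nonneg
  have hdc : c ≤ dd c := dd_ge hc0
  have hdu : dd c ≤ 2*c+1 := dd_le hc0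
  have hre : rr c ≤ rr2 c := rr_le_rr2 hc0 hc1
  have hsl : (1.41:ℝ) ≤ Real.sqrt 2 := s2_lb
  have hsu : Real.sqrt 2 ≤ 1.415 := s2_ub
  have hcu : c ≤ 1/10 := hc10 hc1
  have hsc0 : 0 ≤ Real.sqrt 2 * c := mul_nonneg (by linarith) hc0
  have hsc2 : Real.sqrt 2 * c ≤ 1.415 * c := by
    nlinarith [mul_nonneg (sub_nonneg.2 hsu) hc0]
  have hrr : rr c = (2*c + dd c)/3 := rfl
  have hrr2 : rr2 c = (2-Real.sqrt 2)*(c+1)/3 := rfl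
  have haP : aP c = 2*(c+1)/3 := rfl
  have hqq1 : qq1 c = aP c + rr c := rfl
  have hqq2 : qq2 c = aP c + rr2 c := rfl
  have hb1 : c ≤ rr c := by linarith
  have hb2 : rr c ≤ rr2 c := hre
  have hb3 : rr2 c ≤ qq2 c - x := by linarith
  have hb4 : qq2 c - x ≤ c + 1 := by linarith
  have v1 : ∀ y ∈ Ioo c (rr c), Fp c (x, y) = 0 := by
    intro y hy
    rw [Fp_mk, if_pos (lt_of_le_of_lt (min_le_right x y) hy.2),
      if_neg (not_lt.2 (by linarith [hy.2] : x + y ≤ qq1 c))]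
  have v2 : ∀ y ∈ Ioo (rr c) (rr2 c), Fp c (x, y) = 0 := by
    intro y hy
    rw [Fp_mk, if_neg (not_lt.2 (le_min (by linarith) hy.1.le)),
      if_pos (lt_of_le_of_lt (min_le_right x y) hy.2),
      if_neg (not_lt.2 (max_le hx2.le (by linarith [hy.2])))]
  have v3 : ∀ y ∈ Ioo (rr2 c) (qq2 c - x), Fp c (x, y) = 0 := by
    intro y hy
    rw [Fp_mk, if_neg (not_lt.2 (le_min (by linarith) (by linarith [hy.1]))),
      if_neg (not_lt.2 (le_min hx1.le hy.1.le)),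
      if_neg (not_lt.2 (by linarith [hy.2] : x + y ≤ qq2 c))]
  have v4 : ∀ y ∈ Ioo (qq2 c - x) (c+1), Fp c (x, y) = qq2 c := by
    intro y hy
    rw [Fp_mk, if_neg (not_lt.2 (le_min (by linarith) (by linarith [hy.1]))),
      if_neg (not_lt.2 (le_min hx1.le (by linarith [hy.1]))),
      if_pos (by linarith [hy.1] : qq2 c < x + y)]
  have I1 := intInt_const_Ioo hb1 v1
  have I2 := intInt_const_Ioo hb2 v2
  have I3 := intInt_const_Ioo hb3 v3
  have I4 := intInt_const_Ioo hb4 v4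
  rw [integral_Icc_eq_integral_Ioc, ← intervalIntegral.integral_of_le (by linarith : c ≤ c+1),
    ← intervalIntegral.integral_add_adjacent_intervals ((I1.trans I2).trans I3) I4,
    ← intervalIntegral.integral_add_adjacent_intervals (I1.trans I2) I3,
    ← intervalIntegral.integral_add_adjacent_intervals I1 I2,
    int_const_Ioo hb1 v1, int_const_Ioo hb2 v2, int_const_Ioo hb3 v3, int_const_Ioo hb4 v4]
  ring

lemma inner4 {c x : ℝ} (hc0 : 0 ≤ c) (hc1 : c ≤ cbar) (hx1 : aP c < x) (hx2 : x < qq1 c - c) :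
    ∫ y in Icc c (c+1), Fp c (x, y) =
      qq1 c * (rr c - (qq1 c - x)) + aP c * (rr2 c - rr c) + qq2 c * (c + 1 - rr2 c) := by
  have hd0 : 0 ≤ dd c := dd_nonneg
  have hdc : c ≤ dd c := dd_ge hc0
  have hdu : dd c ≤ 2*c+1 := dd_le hc0
  have hre : rr c ≤ rr2 c := rr_le_rr2 hc0 hc1
  have hsl : (1.41:ℝ) ≤ Real.sqrt 2 := s2_lb
  have hsu : Real.sqrt 2 ≤ 1.415 := s2_ub
  have hcu : c ≤ 1/10 := hc10 hc1
  have hsc0 : 0 ≤ Real.sqrt 2 * c := mul_nonneg (by linarith) hc0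
  have hsc2 : Real.sqrt 2 * c ≤ 1.415 * c := by
    nlinarith [mul_nonneg (sub_nonneg.2 hsu) hc0]
  have hrr : rr c = (2*c + dd c)/3 := rfl
  have hrr2 : rr2 c = (2-Real.sqrt 2)*(c+1)/3 := rfl
  have haP : aP c = 2*(c+1)/3 := rfl
  have hqq1 : qq1 c = aP c + rr c := rfl
  have hqq2 : qq2 c = aP c + rr2 c := rfl
  have hb1 : c ≤ qq1 c - x := by linarith
  have hb2 : qq1 c - x ≤ rr c := by linarith
  have hb3 : rr c ≤ rr2 c := hre
  have hb4 : rr2 c ≤ c + 1 := by linarith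
  have v1 : ∀ y ∈ Ioo c (qq1 c - x), Fp c (x, y) = 0 := by
    intro y hy
    rw [Fp_mk, if_pos (lt_of_le_of_lt (min_le_right x y) (by linarith [hy.2])),
      if_neg (not_lt.2 (by linarith [hy.2] : x + y ≤ qq1 c))]
  have v2 : ∀ y ∈ Ioo (qq1 c - x) (rr c), Fp c (x, y) = qq1 c := by
    intro y hy
    rw [Fp_mk, if_pos (lt_of_le_of_lt (min_le_right x y) hy.2),
      if_pos (by linarith [hy.1] : qq1 c < x + y)]
  have v3 : ∀ y ∈ Ioo (rr c) (rr2 c), Fp c (x, y) = aP c := by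
    intro y hy
    rw [Fp_mk, if_neg (not_lt.2 (le_min (by linarith) hy.1.le)),
      if_pos (lt_of_le_of_lt (min_le_right x y) hy.2),
      if_pos (lt_of_lt_of_le hx1 (le_max_left x y))]
  have v4 : ∀ y ∈ Ioo (rr2 c) (c+1), Fp c (x, y) = qq2 c := by
    intro y hy
    rw [Fp_mk, if_neg (not_lt.2 (le_min (by linarith) (by linarith [hy.1]))),
      if_neg (not_lt.2 (le_min (by linarith) hy.1.le)),
      if_pos (by linarith [hy.1] : qq2 c < x + y)]
  have I1 := intInt_const_Ioo hb1 v1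
  have I2 := intInt_const_Ioo hb2 v2
  have I3 := intInt_const_Ioo hb3 v3
  have I4 := intInt_const_Ioo hb4 v4
  rw [integral_Icc_eq_integral_Ioc, ← intervalIntegral.integral_of_le (by linarith : c ≤ c+1),
    ← intervalIntegral.integral_add_adjacent_intervals ((I1.trans I2).trans I3) I4,
    ← intervalIntegral.integral_add_adjacent_intervals (I1.trans I2) I3,
    ← intervalIntegral.integral_add_adjacent_intervals I1 I2,
    int_const_Ioo hb1 v1, int_const_Ioo hb2 v2, int_const_Ioo hb3 v3, int_const_Ioo hb4 v4]
  ring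

lemma inner5 {c x : ℝ} (hc0 : 0 ≤ c) (hc1 : c ≤ cbar) (hx1 : qq1 c - c < x) (hx2 : x < c + 1) :
    ∫ y in Icc c (c+1), Fp c (x, y) =
      qq1 c * (rr c - c) + aP c * (rr2 c - rr c) + qq2 c * (c + 1 - rr2 c) := by
  have hd0 : 0 ≤ dd c := dd_nonneg
  have hdc : c ≤ dd c := dd_ge hc0
  have hdu : dd c ≤ 2*c+1 := dd_le hc0
  have hre : rr c ≤ rr2 c := rr_le_rr2 hc0 hc1
  have hsl : (1.41:ℝ) ≤ Real.sqrt 2 := s2_lb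
  have hsu : Real.sqrt 2 ≤ 1.415 := s2_ub
  have hcu : c ≤ 1/10 := hc10 hc1
  have hsc0 : 0 ≤ Real.sqrt 2 * c := mul_nonneg (by linarith) hc0
  have hsc2 : Real.sqrt 2 * c ≤ 1.415 * c := by
    nlinarith [mul_nonneg (sub_nonneg.2 hsu) hc0]
  have hrr : rr c = (2*c + dd c)/3 := rfl
  have hrr2 : rr2 c = (2-Real.sqrt 2)*(c+1)/3 := rfl
  have haP : aP c = 2*(c+1)/3 := rfl
  have hqq1 : qq1 c = aP c + rr c := rfl
  have hqq2 : qq2 c = aP c + rr2 c := rfl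
  have hb1 : c ≤ rr c := by linarith
  have hb2 : rr c ≤ rr2 c := hre
  have hb3 : rr2 c ≤ c + 1 := by linarith
  have v1 : ∀ y ∈ Ioo c (rr c), Fp c (x, y) = qq1 c := by
    intro y hy
    rw [Fp_mk, if_pos (lt_of_le_of_lt (min_le_right x y) hy.2),
      if_pos (by linarith [hy.1] : qq1 c < x + y)]
  have v2 : ∀ y ∈ Ioo (rr c) (rr2 c), Fp c (x, y) = aP c := by
    intro y hy
    rw [Fp_mk, if_neg (not_lt.2 (le_min (by linarith) hy.1.le)),
      if_pos (lt_of_le_of_lt (min_le_right x y) hy.2),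
      if_pos (by
        have : aP c < x := by linarith
        exact lt_of_lt_of_le this (le_max_left x y))]
  have v3 : ∀ y ∈ Ioo (rr2 c) (c+1), Fp c (x, y) = qq2 c := by
    intro y hy
    rw [Fp_mk, if_neg (not_lt.2 (le_min (by linarith) (by linarith [hy.1]))),
      if_neg (not_lt.2 (le_min (by linarith) hy.1.le)),
      if_pos (by linarith [hy.1] : qq2 c < x + y)]
  have I1 := intInt_const_Ioo hb1 v1
  have I2 := intInt_const_Ioo hb2 v2
  have I3 := intInt_const_Ioo hb3 v3
  rw [integral_Icc_eq_integral_Ioc, ← intervalIntegral.integral_of_le (by linarith : c ≤ c+1),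
    ← intervalIntegral.integral_add_adjacent_intervals (I1.trans I2) I3,
    ← intervalIntegral.integral_add_adjacent_intervals I1 I2,
    int_const_Ioo hb1 v1, int_const_Ioo hb2 v2, int_const_Ioo hb3 v3]
/-! ### the outer integral -/

noncomputable def Iexp (c : ℝ) (x : ℝ) : ℝ :=
  if x < rr c then qq1 c * (c + 1 - (qq1 c - x))
  else if x < rr2 c then aP c * (c + 1 - aP c)
  else if x < aP c then qq2 c * (c + 1 - (qq2 c - x))
  else if x < qq1 c - c then
    qq1 c * (rr c - (qq1 c - x)) + aP c * (rr2 c - rr c) + qq2 c * (c + 1 - rr2 c)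
  else qq1 c * (rr c - c) + aP c * (rr2 c - rr c) + qq2 c * (c + 1 - rr2 c)

lemma outer_congr {c : ℝ} (hc0 : 0 ≤ c) (hc1 : c ≤ cbar) :
    ∫ x in Icc c (c+1), (∫ y in Icc c (c+1), Fp c (x, y)) = ∫ x in Icc c (c+1), Iexp c x := by
  apply setIntegral_congr_ae measurableSet_Icc
  filter_upwards [ae_ne_pt (rr c), ae_ne_pt (rr2 c), ae_ne_pt (aP c), ae_ne_pt (qq1 c - c),
    ae_ne_pt c, ae_ne_pt (c+1)] with x n1 n2 n3 n4 n5 n6 hmem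
  have hx1 : c < x := lt_of_le_of_ne hmem.1 (Ne.symm n5)
  have hx2 : x < c + 1 := lt_of_le_of_ne hmem.2 n6
  unfold Iexp
  by_cases H1 : x < rr c
  · rw [if_pos H1, inner1 hc0 hc1 hx1 H1]
  rw [if_neg H1]
  have hg1 : rr c < x := lt_of_le_of_ne (not_lt.1 H1) (Ne.symm n1)
  by_cases H2 : x < rr2 c
  · rw [if_pos H2, inner2 hc0 hc1 hg1 H2]
  rw [if_neg H2]
  have hg2 : rr2 c < x := lt_of_le_of_ne (not_lt.1 H2) (Ne.symm n2)
  by_cases H3 : x < aP c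
  · rw [if_pos H3, inner3 hc0 hc1 hg2 H3]
  rw [if_neg H3]
  have hg3 : aP c < x := lt_of_le_of_ne (not_lt.1 H3) (Ne.symm n3)
  by_cases H4 : x < qq1 c - c
  · rw [if_pos H4, inner4 hc0 hc1 hg3 H4]
  rw [if_neg H4]
  have hg4 : qq1 c - c < x := lt_of_le_of_ne (not_lt.1 H4) (Ne.symm n4)
  rw [inner5 hc0 hc1 hg4 hx2]

lemma outer_value {c : ℝ} (hc0 : 0 ≤ c) (hc1 : c ≤ cbar) :
    ∫ x in Icc c (c+1), Iexp c x = Opt c := by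
  have hd0 : 0 ≤ dd c := dd_nonneg
  have hdc : c ≤ dd c := dd_ge hc0
  have hdu : dd c ≤ 2*c+1 := dd_le hc0
  have hre : rr c ≤ rr2 c := rr_le_rr2 hc0 hc1
  have hsl : (1.41:ℝ) ≤ Real.sqrt 2 := s2_lb
  have hsu : Real.sqrt 2 ≤ 1.415 := s2_ub
  have hcu : c ≤ 1/10 := hc10 hc1
  have hsc0 : 0 ≤ Real.sqrt 2 * c := mul_nonneg (by linarith) hc0
  have hsc2 : Real.sqrt 2 * c ≤ 1.415 * c := by
    nlinarith [mul_nonneg (sub_nonneg.2 hsu) hc0]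
  have hrr : rr c = (2*c + dd c)/3 := rfl
  have hrr2 : rr2 c = (2-Real.sqrt 2)*(c+1)/3 := rfl
  have haP : aP c = 2*(c+1)/3 := rfl
  have hqq1 : qq1 c = aP c + rr c := rfl
  have hqq2 : qq2 c = aP c + rr2 c := rfl
  have hb1 : c ≤ rr c := by linarith
  have hb2 : rr c ≤ rr2 c := hre
  have hb3 : rr2 c ≤ aP c := by linarith
  have hb4 : aP c ≤ qq1 c - c := by linarith
  have hb5 : qq1 c - c ≤ c + 1 := by linarith
  have v1 : ∀ x ∈ Ioo c (rr c), Iexp c x = qq1 c * (c + 1 - qq1 c) + qq1 c * x := by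
    intro x hx
    unfold Iexp
    rw [if_pos hx.2]; ring
  have v2 : ∀ x ∈ Ioo (rr c) (rr2 c), Iexp c x = aP c * (c + 1 - aP c) := by
    intro x hx
    unfold Iexp
    rw [if_neg (not_lt.2 hx.1.le), if_pos hx.2]
  have v3 : ∀ x ∈ Ioo (rr2 c) (aP c), Iexp c x = qq2 c * (c + 1 - qq2 c) + qq2 c * x := by
    intro x hx
    unfold Iexp
    rw [if_neg (not_lt.2 (by linarith [hx.1])), if_neg (not_lt.2 hx.1.le), if_pos hx.2]; ring
  have v4 : ∀ x ∈ Ioo (aP c) (qq1 c - c), Iexp c x =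
      (qq1 c * (rr c - qq1 c) + aP c * (rr2 c - rr c) + qq2 c * (c + 1 - rr2 c)) + qq1 c * x := by
    intro x hx
    unfold Iexp
    rw [if_neg (not_lt.2 (by linarith [hx.1])), if_neg (not_lt.2 (by linarith [hx.1])),
      if_neg (not_lt.2 hx.1.le), if_pos hx.2]
    ring
  have v5 : ∀ x ∈ Ioo (qq1 c - c) (c + 1), Iexp c x =
      qq1 c * (rr c - c) + aP c * (rr2 c - rr c) + qq2 c * (c + 1 - rr2 c) := by
    intro x hx
    unfold Iexp
    rw [if_neg (not_lt.2 (by linarith [hx.1])), if_neg (not_lt.2 (by linarith [hx.1])),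
      if_neg (not_lt.2 (by linarith [hx.1])), if_neg (not_lt.2 hx.1.le)]
  have I1 := intInt_linear_Ioo hb1 v1
  have I2 := intInt_const_Ioo hb2 v2
  have I3 := intInt_linear_Ioo hb3 v3
  have I4 := intInt_linear_Ioo hb4 v4
  have I5 := intInt_const_Ioo hb5 v5
  rw [integral_Icc_eq_integral_Ioc, ← intervalIntegral.integral_of_le (by linarith : c ≤ c+1),
    ← intervalIntegral.integral_add_adjacent_intervals (((I1.trans I2).trans I3).trans I4) I5,
    ← intervalIntegral.integral_add_adjacent_intervals ((I1.trans I2).trans I3) I4,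
    ← intervalIntegral.integral_add_adjacent_intervals (I1.trans I2) I3,
    ← intervalIntegral.integral_add_adjacent_intervals I1 I2,
    int_linear_Ioo hb1 v1, int_const_Ioo hb2 v2, int_linear_Ioo hb3 v3,
    int_linear_Ioo hb4 v4, int_const_Ioo hb5 v5]
  have hd2' : Real.sqrt (c * (3 * c + 2)) ^ 2 = 3 * c^2 + 2 * c := dd_sq hc0
  simp only [Opt, qq1, qq2, rr, rr2, aP, dd]
  linear_combination (-(Real.sqrt (c*(3*c+2)))/27) * hd2' +
    (-(Real.sqrt 2)*(c+1)^3/54) * s2_sq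

/-- For every `0 ≤ c ≤ c̄` there is a Lipschitz `u : ℝ² → ℝ`,
nonnegative on `[c,c+1]²`, with partial derivatives in `[0,1]` a.e. on `[c,c+1]²`,
achieving `Rev_c(u) = Opt(c)`. -/
theorem relaxed_optimal_attained (c : ℝ) (hc0 : 0 ≤ c) (hc1 : c ≤ cbar) :
    ∃ u : ℝ × ℝ → ℝ, (∃ K : NNReal, LipschitzWith K u) ∧
      (∀ x ∈ box c, 0 ≤ u x) ∧
      (∀ᵐ x ∂(volume.restrict (box c)),
        pd1 u x ∈ Icc (0 : ℝ) 1 ∧ pd2 u x ∈ Icc (0 : ℝ) 1) ∧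
      Rev c u = Opt c := by
  refine ⟨UU c, UU_lipschitz c, fun x _ => UU_nonneg c x, ?_, ?_⟩
  · exact ae_restrict_of_ae ((ae_good c hc0 hc1).mono fun p hp => hp.1)
  · rw [rev_eq_iterated hc0 hc1, outer_congr hc0 hc1, outer_value hc0 hc1]
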